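/- For nonnegative integers k_1, ..., k_z and m with m ∉ {1,2,3}, if k_1 + ... + k_z + m = x and x > 3, then C(k_1+1,2) + ... + C(k_z+1,2) + (m^2 - m) ≤ x^2 - x. If instead x ≤ 3, the same sum is at most C(x+1,2). -/

import Mathlib

lemma two_mul_choose_two (n : ℕ) : 2 * (n + 1).choose 2 = n * (n + 1) := by
  induction n with
  | zero => rfl
  | succ n ih =>
    rw [show n + 1 + 1 = (n + 1) + 1 from rfl, Nat.choose_succ_succ (n + 1) 1]
    rw [Nat.mul_add, ih, Nat.choose_one_right]
    ring

lemma choose_superadd (a b : ℕ) :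
    (a + 1).choose 2 + (b + 1).choose 2 ≤ (a + b + 1).choose 2 := by
  have h := two_mul_choose_two a
  have h2 := two_mul_choose_two b
  have h3 := two_mul_choose_two (a + b)
  apply Nat.le_of_mul_le_mul_left _ (show 0 < 2 by norm_num)
  rw [Nat.mul_add, h, h2, h3]
  nlinarith

lemma sum_choose_le {ι : Type*} [DecidableEq ι] (s : Finset ι) (k : ι → ℕ) :
    ∑ i ∈ s, (k i + 1).choose 2 ≤ ((∑ i ∈ s, k i) + 1).choose 2 := by
  induction s using Finset.induction with
  | empty => simp
  | insert a s h ih =>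
    rw [Finset.sum_insert h, Finset.sum_insert h]
    calc (k a + 1).choose 2 + ∑ i ∈ s, (k i + 1).choose 2
        ≤ (k a + 1).choose 2 + ((∑ i ∈ s, k i) + 1).choose 2 := by gcongr
      _ ≤ (k a + (∑ i ∈ s, k i) + 1).choose 2 := choose_superadd _ _

/-- For nonnegative integers `k 1, ..., k z` and `m ∉ {1,2,3}` with `∑ i, k i + m = x`:
if `x > 3` then `∑ i, C(k i + 1, 2) + (m² - m) ≤ x² - x`, and if `x ≤ 3` then
`∑ i, C(k i + 1, 2) + (m² - m) ≤ C(x + 1, 2)`. -/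
theorem stmt_4 (z : ℕ) (k : Fin z → ℕ) (m x : ℕ)
    (hm : m ≠ 1 ∧ m ≠ 2 ∧ m ≠ 3)
    (hsum : (∑ i, k i) + m = x) :
    (x > 3 → (∑ i, (k i + 1).choose 2) + (m ^ 2 - m) ≤ x ^ 2 - x) ∧
    (x ≤ 3 → (∑ i, (k i + 1).choose 2) + (m ^ 2 - m) ≤ (x + 1).choose 2) := by
  set S := ∑ i, k i with hS
  have hsumle : (∑ i, (k i + 1).choose 2) ≤ (S + 1).choose 2 :=
    sum_choose_le Finset.univ k
  constructor
  · intro hx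
    have key : (S + 1).choose 2 + (m ^ 2 - m) ≤ x ^ 2 - x := by
      apply Nat.le_of_mul_le_mul_left _ (show 0 < 2 by norm_num)
      have h1 := two_mul_choose_two S
      have hmm : m ≤ m ^ 2 := by nlinarith
      have hxx : x ≤ x ^ 2 := by nlinarith
      rw [Nat.mul_add, h1]
      rcases Nat.eq_zero_or_pos m with hm0 | hm1
      · subst hm0
        simp only [Nat.zero_pow, Nat.sub_zero, Nat.mul_zero, Nat.add_zero] at *
        have : x = S := by omega
        subst this
        have := hx
        zify [hxx]
        nlinarith
      · have hm4 : 4 ≤ m := by omega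
        have hmx : m ≤ x := by omega
        have hSx : S = x - m := by omega
        zify [hmm, hxx]
        have hSx' : (S : ℤ) + m = x := by exact_mod_cast hsum
        nlinarith
    omega
  · intro hx
    have hm0 : m = 0 := by omega
    subst hm0
    simp only [Nat.zero_pow, Nat.sub_zero, Nat.add_zero, pow_two, Nat.mul_zero] at *
    have : x = S := by omega
    subst this
    simpa using hsumle
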